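/- Let {G_i}_{i∈I} be a family of topological groups and, for each i, let S_i be a subgroup of G_i. In the product topological group ∏_{i∈I} G_i (with the product topology), the Bohr-closure is productive: c_b(∏_{i∈I} S_i) = ∏_{i∈I} c_b(S_i), where c_b(S_i) is computed in G_i. -/

import Mathlib

open Set Topology

universe u

/-- The Bohr-closure of a subset `S` of a topological group `G`: the set of `g ∈ G` such that
`f g ∈ cl(f(S))` for every continuous homomorphism `f` from `G` into a compact Hausdorff
topological group. -/
def bohrClosure (G : Type u) [Group G] [TopologicalSpace G] (S : Set G) : Set G :=
  {g : G | ∀ (K : Type u) [Group K] [TopologicalSpace K] [IsTopologicalGroup K]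
    [CompactSpace K] [T2Space K] (f : G →* K), Continuous f → f g ∈ closure (f '' S)}

/-- The von Neumann kernel `n(G)` of a topological group `G`. -/
def vonNeumannKernel (G : Type u) [Group G] [TopologicalSpace G] : Set G :=
  bohrClosure G {1}

/-- A topological group `G` is `c_b`-compact if for every topological group `Y` and every
subgroup `S` of `G × Y`, the projection `π_Y` preserves the Bohr-closure. -/
def IsCbCompact (G : Type u) [Group G] [TopologicalSpace G] [IsTopologicalGroup G] : Prop :=
  ∀ (Y : Type u) [Group Y] [TopologicalSpace Y] [IsTopologicalGroup Y] (S : Subgroup (G × Y)),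
    Prod.snd '' bohrClosure (G × Y) (S : Set (G × Y)) =
      bohrClosure Y (Prod.snd '' (S : Set (G × Y)))

/-- The Bohr-closure is productive: in a product `∏ᵢ Gᵢ` of topological groups,
`c_b(∏ᵢ Sᵢ) = ∏ᵢ c_b(Sᵢ)` for subgroups `Sᵢ ≤ Gᵢ`. -/
theorem bohrClosure_pi {ι : Type u} (G : ι → Type u)
    [∀ i, Group (G i)] [∀ i, TopologicalSpace (G i)] [∀ i, IsTopologicalGroup (G i)]
    (S : ∀ i, Subgroup (G i)) :
    bohrClosure (∀ i, G i) (Set.pi Set.univ fun i => (S i : Set (G i))) =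
      Set.pi Set.univ fun i => bohrClosure (G i) (S i : Set (G i)) := by
  classical
  ext g
  simp only [bohrClosure, Set.mem_setOf_eq, Set.mem_pi, Set.mem_univ, forall_true_left]
  constructor
  · intro h i K _ _ _ _ _ f hf
    have hmem := h K (f.comp (Pi.evalMonoidHom G i)) (hf.comp (continuous_apply i))
    have himg : (f.comp (Pi.evalMonoidHom G i)) '' (Set.pi Set.univ fun j => (S j : Set (G j)))
        = f '' (S i : Set (G i)) := by
      rw [MonoidHom.coe_comp, Set.image_comp]
      exact congrArg (f '' ·)
        (Set.eval_image_univ_pi (i := i) ⟨fun j => 1, fun j _ => (S j).one_mem⟩)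
    rwa [himg] at hmem
  · intro h K _ _ _ _ _ f hf
    set H : Subgroup K := ((Subgroup.pi Set.univ S).map f).topologicalClosure with hH
    have hHcoe : (H : Set K) = closure (f '' Set.pi Set.univ fun i => (S i : Set (G i))) := by
      rw [hH, Subgroup.topologicalClosure_coe, Subgroup.coe_map, Subgroup.coe_pi]
    rw [← hHcoe]
    have hsingle : ∀ i, f (Pi.mulSingle i (g i)) ∈ H := by
      intro i
      have hmem := h i K (f.comp (MonoidHom.mulSingle G i)) (hf.comp (continuous_mulSingle i))
      have hsub : (f.comp (MonoidHom.mulSingle G i)) '' (S i : Set (G i))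
          ⊆ f '' Set.pi Set.univ fun j => (S j : Set (G j)) := by
        rintro _ ⟨s, hs, rfl⟩
        refine ⟨Pi.mulSingle i s, fun j _ => ?_, rfl⟩
        by_cases hj : j = i
        · subst hj; simpa using hs
        · simp [Pi.mulSingle_eq_of_ne hj, (S j).one_mem]
      have := closure_mono hsub hmem
      rwa [← hHcoe] at this
    have hF : ∀ F : Finset ι, f (fun i => if i ∈ F then g i else 1) ∈ H := by
      intro F
      induction F using Finset.induction with
      | empty =>
        have h1 : (fun i : ι => if i ∈ (∅ : Finset ι) then g i else 1) = (1 : ∀ i, G i) := by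
          funext j; simp
        rw [h1, map_one]; exact H.one_mem
      | @insert a F ha ih =>
        have key : (fun i => if i ∈ insert a F then g i else 1) =
            Pi.mulSingle a (g a) * fun i => if i ∈ F then g i else 1 := by
          funext j
          by_cases hj : j = a
          · subst hj
            simp [Pi.mulSingle_eq_same, ha]
          · simp [Pi.mulSingle_eq_of_ne hj, Finset.mem_insert, hj]
        rw [key, map_mul]
        exact H.mul_mem (hsingle a) ih
    have htend : Filter.Tendsto (fun F : Finset ι => f fun i => if i ∈ F then g i else 1)
        Filter.atTop (nhds (f g)) := by
      refine (hf.tendsto g).comp ?_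
      rw [tendsto_pi_nhds]
      intro i
      refine tendsto_nhds_of_eventually_eq ?_
      filter_upwards [Filter.eventually_ge_atTop ({i} : Finset ι)] with F hle
      simp [Finset.singleton_subset_iff.mp hle]
    have hclosed : IsClosed (H : Set K) :=
      ((Subgroup.pi Set.univ S).map f).isClosed_topologicalClosure
    rw [hHcoe] at hclosed
    rw [← hHcoe] at *
    exact hclosed.mem_of_tendsto htend (Filter.Eventually.of_forall hF)
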